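/- Let (Z(n)) be an irreducible Markov chain on Z_+^2 (with μ_0, μ_1, μ_2 stochastic) that is transient, and suppose that for the Green functions g of the chain killed at 0 there exists a function κ with κ(0) > 0 such that lim_{‖k‖→∞} g(j,k)/g(0,k) = κ(j)/κ(0) for all j, and that the only nonnegative harmonic functions of (Z(n)) are (up to constants) the constants. Then P_0(τ_0 = ∞)·(κ(j)/κ(0)) + P_j(τ_0 < ∞) = 1 for every j ∈ Z_+^2, and consequently lim_{‖k‖→∞} G(j,k)/G(0,k) = 1 for all j. -/

import Mathlib

open Filter

/-- `n`-step transition function of the Markov chain with one-step kernel `p`. -/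
noncomputable def iterK {S : Type*} [DecidableEq S] (p : S → S → ℝ) : ℕ → S → S → ℝ
  | 0 => fun j k => if j = k then 1 else 0
  | n + 1 => fun j k => ∑' l, iterK p n j l * p l k

/-- One-step kernel of the chain killed at the origin `(0,0)`. -/
noncomputable def killK (p : ℕ × ℕ → ℕ × ℕ → ℝ) : ℕ × ℕ → ℕ × ℕ → ℝ :=
  fun j k => if k = (0, 0) then 0 else p j k

/-- Green function `G(j,k)`. -/
noncomputable def GreenG (p : ℕ × ℕ → ℕ × ℕ → ℝ) (j k : ℕ × ℕ) : ℝ :=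
  ∑' n : ℕ, iterK p n j k

/-- Green function `g(j,k)` of the chain killed at the origin. -/
noncomputable def Greeng (p : ℕ × ℕ → ℕ × ℕ → ℝ) (j k : ℕ × ℕ) : ℝ :=
  ∑' n : ℕ, iterK (killK p) n j k

/-- `P_j(τ₀ < ∞)`, the probability of hitting the origin at a time `≥ 1`. -/
noncomputable def hitProb (p : ℕ × ℕ → ℕ × ℕ → ℝ) (j : ℕ × ℕ) : ℝ :=
  ∑' n : ℕ, ∑' l : ℕ × ℕ, iterK (killK p) n j l * p l (0, 0)

set_option linter.unusedSectionVars false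
set_option maxHeartbeats 1000000

section helpers
variable {α β : Type*}

lemma swap_tsum {f : α → β → ℝ} (hnn : ∀ a b, 0 ≤ f a b)
    (hrow : ∀ a, Summable (f a)) (hmarg : Summable fun a => ∑' b, f a b) :
    (∀ b, Summable fun a => f a b) ∧ Summable (fun b => ∑' a, f a b) ∧
      (∑' b, ∑' a, f a b) = ∑' a, ∑' b, f a b := by
  have hF : Summable (Function.uncurry f) :=
    (summable_prod_of_nonneg (fun x => hnn x.1 x.2)).2 ⟨hrow, hmarg⟩
  exact ⟨fun b => hF.prod_symm.prod_factor b, hF.prod_symm.prod, Summable.tsum_comm hF⟩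

end helpers

section kernels
variable {S : Type*} [DecidableEq S]

/-- A subkernel: nonnegative with row sums `≤ 1`, rows summable. -/
structure SubK (q : S → S → ℝ) : Prop where
  nn : ∀ j k, 0 ≤ q j k
  summ : ∀ j, Summable (q j)
  le_one : ∀ j, ∑' k, q j k ≤ 1

omit [DecidableEq S] in
lemma SubK.entry_le_one {q : S → S → ℝ} (hq : SubK q) (j k : S) : q j k ≤ 1 :=
  le_trans (Summable.le_tsum (hq.summ j) k fun _ _ => hq.nn j _) (hq.le_one j)

lemma iterK_zero (q : S → S → ℝ) (j k : S) :
    iterK q 0 j k = if j = k then 1 else 0 := rfl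

lemma iterK_succ (q : S → S → ℝ) (n : ℕ) (j k : S) :
    iterK q (n + 1) j k = ∑' l, iterK q n j l * q l k := rfl

lemma iterK_nonneg {q : S → S → ℝ} (hq : SubK q) (n : ℕ) (j k : S) :
    0 ≤ iterK q n j k := by
  induction n generalizing j k with
  | zero => simp only [iterK]; positivity
  | succ n ih => exact tsum_nonneg fun l => mul_nonneg (ih j l) (hq.nn l k)

/-- rows of `iterK q n` are summable with sum at most 1. -/
lemma iterK_row {q : S → S → ℝ} (hq : SubK q) (n : ℕ) (j : S) :
    Summable (iterK q n j) ∧ ∑' k, iterK q n j k ≤ 1 := by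
  induction n generalizing j with
  | zero =>
    simp only [iterK_zero]
    exact ⟨(hasSum_ite_eq' j (1:ℝ)).summable, le_of_eq (hasSum_ite_eq' j (1:ℝ)).tsum_eq⟩
  | succ n ih =>
    have hnn : ∀ l k, 0 ≤ iterK q n j l * q l k :=
      fun l k => mul_nonneg (iterK_nonneg hq n j l) (hq.nn l k)
    have hrow : ∀ l, Summable fun k => iterK q n j l * q l k :=
      fun l => (hq.summ l).mul_left _
    have hmarg : Summable fun l => ∑' k, iterK q n j l * q l k := by
      refine Summable.of_nonneg_of_le (fun l => tsum_nonneg (hnn l)) (fun l => ?_) (ih j).1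
      rw [tsum_mul_left]
      calc iterK q n j l * ∑' k, q l k ≤ iterK q n j l * 1 :=
            mul_le_mul_of_nonneg_left (hq.le_one l) (iterK_nonneg hq n j l)
        _ = iterK q n j l := mul_one _
    obtain ⟨hcol, hsum, heq⟩ := swap_tsum hnn hrow hmarg
    constructor
    · exact hsum.congr fun k => rfl
    · show (∑' k, ∑' l, iterK q n j l * q l k) ≤ 1
      rw [heq]
      calc (∑' l, ∑' k, iterK q n j l * q l k) ≤ ∑' l, iterK q n j l := by
            refine Summable.tsum_le_tsum (fun l => ?_) hmarg (ih j).1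
            rw [tsum_mul_left]
            calc iterK q n j l * ∑' k, q l k ≤ iterK q n j l * 1 :=
                  mul_le_mul_of_nonneg_left (hq.le_one l) (iterK_nonneg hq n j l)
              _ = iterK q n j l := mul_one _
        _ ≤ 1 := (ih j).2

lemma iterK_entry_le_one {q : S → S → ℝ} (hq : SubK q) (n : ℕ) (j k : S) :
    iterK q n j k ≤ 1 :=
  le_trans (Summable.le_tsum (iterK_row hq n j).1 k fun _ _ => iterK_nonneg hq n j _)
    (iterK_row hq n j).2

/-- monotonicity in the kernel -/
lemma iterK_mono {q q' : S → S → ℝ} (hq : SubK q) (hq' : SubK q')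
    (hle : ∀ j k, q j k ≤ q' j k) (n : ℕ) (j k : S) :
    iterK q n j k ≤ iterK q' n j k := by
  induction n generalizing j k with
  | zero => exact le_rfl
  | succ n ih =>
    refine Summable.tsum_le_tsum (fun l => ?_) ?_ ?_
    · exact mul_le_mul (ih j l) (hle l k) (hq.nn l k) (iterK_nonneg hq' n j l)
    · refine Summable.of_nonneg_of_le
        (fun l => mul_nonneg (iterK_nonneg hq n j l) (hq.nn l k))
        (fun l => mul_le_mul (le_rfl) (hq.entry_le_one l k) (hq.nn l k)
          (iterK_nonneg hq n j l) |>.trans (le_of_eq (mul_one _))) (iterK_row hq n j).1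
    · refine Summable.of_nonneg_of_le
        (fun l => mul_nonneg (iterK_nonneg hq' n j l) (hq'.nn l k))
        (fun l => mul_le_mul (le_rfl) (hq'.entry_le_one l k) (hq'.nn l k)
          (iterK_nonneg hq' n j l) |>.trans (le_of_eq (mul_one _))) (iterK_row hq' n j).1

/-- summability of the weighted row `l ↦ a l * q l k`. -/
lemma summable_row_mul {q : S → S → ℝ} (hq : SubK q) {a : S → ℝ} (ha : Summable a)
    (hann : ∀ l, 0 ≤ a l) (k : S) : Summable fun l => a l * q l k :=
  Summable.of_nonneg_of_le (fun l => mul_nonneg (hann l) (hq.nn l k))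
    (fun l => (mul_le_mul le_rfl (hq.entry_le_one l k) (hq.nn l k) (hann l)).trans
      (le_of_eq (mul_one _))) ha

/-- front decomposition -/
lemma iterK_succ_left {q : S → S → ℝ} (hq : SubK q) (n : ℕ) (j k : S) :
    iterK q (n + 1) j k = ∑' l, q j l * iterK q n l k := by
  induction n generalizing k with
  | zero =>
    rw [iterK_succ]
    have h1 : (∑' l, iterK q 0 j l * q l k) = q j k := by
      have he : ∀ l, iterK q 0 j l * q l k = (if j = l then q j k else 0) := by
        intro l; by_cases h : j = l <;> simp [iterK_zero, h]
      rw [tsum_congr he, (hasSum_ite_eq' j (q j k)).tsum_eq]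
    have h2 : (∑' l, q j l * iterK q 0 l k) = q j k := by
      have he : ∀ l, q j l * iterK q 0 l k = (if l = k then q j k else 0) := by
        intro l; by_cases h : l = k <;> simp [iterK_zero, h]
      rw [tsum_congr he, (hasSum_ite_eq k (q j k)).tsum_eq]
    rw [h1, h2]
  | succ n ih =>
    have hnn : ∀ m l, 0 ≤ q j m * iterK q n m l * q l k := fun m l =>
      mul_nonneg (mul_nonneg (hq.nn j m) (iterK_nonneg hq n m l)) (hq.nn l k)
    have hrow : ∀ m, Summable fun l => q j m * iterK q n m l * q l k := by
      intro m
      have := (summable_row_mul hq (iterK_row hq n m).1 (iterK_nonneg hq n m) k).mul_left (q j m)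
      exact this.congr fun l => by ring
    have hmarg : Summable fun m => ∑' l, q j m * iterK q n m l * q l k := by
      refine Summable.of_nonneg_of_le (fun m => tsum_nonneg (hnn m)) (fun m => ?_) (hq.summ j)
      have he : ∀ l, q j m * iterK q n m l * q l k = q j m * (iterK q n m l * q l k) := by
        intro l; ring
      rw [tsum_congr he, tsum_mul_left]
      have hle : (∑' l, iterK q n m l * q l k) ≤ 1 := by
        refine le_trans (Summable.tsum_le_tsum (fun l => ?_)
          (summable_row_mul hq (iterK_row hq n m).1 (iterK_nonneg hq n m) k)
          (iterK_row hq n m).1) (iterK_row hq n m).2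
        calc iterK q n m l * q l k ≤ iterK q n m l * 1 :=
              mul_le_mul_of_nonneg_left (hq.entry_le_one l k) (iterK_nonneg hq n m l)
          _ = iterK q n m l := mul_one _
      calc q j m * ∑' l, iterK q n m l * q l k ≤ q j m * 1 :=
            mul_le_mul_of_nonneg_left hle (hq.nn j m)
        _ = q j m := mul_one _
    obtain ⟨-, -, hswap⟩ := swap_tsum hnn hrow hmarg
    calc iterK q (n + 2) j k = ∑' l, iterK q (n+1) j l * q l k := rfl
      _ = ∑' l, (∑' m, q j m * iterK q n m l) * q l k := by
          refine tsum_congr fun l => ?_; rw [ih l]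
      _ = ∑' l, ∑' m, q j m * iterK q n m l * q l k := by
          refine tsum_congr fun l => ?_; rw [← tsum_mul_right]
      _ = ∑' m, ∑' l, q j m * iterK q n m l * q l k := hswap
      _ = ∑' m, q j m * iterK q (n+1) m k := by
          refine tsum_congr fun m => ?_
          rw [iterK_succ, ← tsum_mul_left]
          exact tsum_congr fun l => by ring

end kernels


section chain
variable {p : ℕ × ℕ → ℕ × ℕ → ℝ}

lemma subK_of_stochastic (hnn : ∀ j k, 0 ≤ p j k) (hrow : ∀ j, ∑' k, p j k = 1) :
    SubK p := by
  refine ⟨hnn, fun j => ?_, fun j => le_of_eq (hrow j)⟩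
  by_contra h
  have := hrow j
  rw [tsum_eq_zero_of_not_summable h] at this
  norm_num at this

lemma killK_le (hp : SubK p) (j k : ℕ × ℕ) : killK p j k ≤ p j k := by
  unfold killK; split
  · exact hp.nn j k
  · exact le_rfl

lemma killK_nn (hp : SubK p) (j k : ℕ × ℕ) : 0 ≤ killK p j k := by
  unfold killK; split
  · exact le_rfl
  · exact hp.nn j k

lemma subK_kill (hp : SubK p) : SubK (killK p) := by
  refine ⟨killK_nn hp, fun j => ?_, fun j => ?_⟩
  · exact Summable.of_nonneg_of_le (killK_nn hp j) (killK_le hp j) (hp.summ j)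
  · refine le_trans (Summable.tsum_le_tsum (killK_le hp j) ?_ (hp.summ j)) (hp.le_one j)
    exact Summable.of_nonneg_of_le (killK_nn hp j) (killK_le hp j) (hp.summ j)

variable (hnn : ∀ j k, 0 ≤ p j k) (hrow : ∀ j, ∑' k, p j k = 1)
  (htrans : ∀ j k, Summable (fun n : ℕ => iterK p n j k))

include hnn hrow htrans in

lemma summable_gkill (j k : ℕ × ℕ) :
    Summable (fun n : ℕ => iterK (killK p) n j k) := by
  have hp := subK_of_stochastic hnn hrow
  exact Summable.of_nonneg_of_le (fun n => iterK_nonneg (subK_kill hp) n j k)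
    (fun n => iterK_mono (subK_kill hp) hp (killK_le hp) n j k) (htrans j k)

include hnn hrow in
lemma GreenG_nonneg (j k : ℕ × ℕ) : 0 ≤ GreenG p j k :=
  tsum_nonneg fun n => iterK_nonneg (subK_of_stochastic hnn hrow) n j k

include hnn hrow in
lemma Greeng_nonneg (j k : ℕ × ℕ) : 0 ≤ Greeng p j k :=
  tsum_nonneg fun n => iterK_nonneg (subK_kill (subK_of_stochastic hnn hrow)) n j k

include hnn hrow htrans in
lemma GreenG_pos (hirr : ∀ j k, ∃ n, 0 < iterK p n j k) (j k : ℕ × ℕ) :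
    0 < GreenG p j k := by
  obtain ⟨n, hn⟩ := hirr j k
  exact Summable.tsum_pos (htrans j k) (fun m => iterK_nonneg (subK_of_stochastic hnn hrow) m j k) n hn

include hnn hrow htrans in
lemma GreenG_one_le (j : ℕ × ℕ) : 1 ≤ GreenG p j j := by
  have h0 : iterK p 0 j j = 1 := by simp [iterK_zero]
  refine le_trans (le_of_eq h0.symm) (Summable.le_tsum (htrans j j) 0 ?_)
  exact fun n _ => iterK_nonneg (subK_of_stochastic hnn hrow) n j j

include hnn hrow in
lemma iterK_add_ge (m : ℕ) (x : ℕ × ℕ) :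
    ∀ n j k, iterK p m j x * iterK p n x k ≤ iterK p (m + n) j k := by
  have hp := subK_of_stochastic hnn hrow
  intro n
  induction n with
  | zero =>
    intro j k
    rw [iterK_zero]
    by_cases h : x = k
    · subst h; rw [if_pos rfl, mul_one, Nat.add_zero]
    · rw [if_neg h, mul_zero]; exact iterK_nonneg hp _ j k
  | succ n ih =>
    intro j k
    have key : (∑' l, (iterK p m j x * iterK p n x l) * p l k)
        ≤ ∑' l, iterK p (m + n) j l * p l k := by
      refine Summable.tsum_le_tsum (fun l => mul_le_mul_of_nonneg_right (ih j l) (hp.nn l k)) ?_ ?_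
      · refine summable_row_mul hp ?_ (fun l => mul_nonneg (iterK_nonneg hp m j x)
          (iterK_nonneg hp n x l)) k
        exact ((iterK_row hp n x).1).mul_left _
      · exact summable_row_mul hp (iterK_row hp (m+n) j).1 (iterK_nonneg hp (m+n) j) k
    calc iterK p m j x * iterK p (n+1) x k
        = ∑' l, (iterK p m j x * iterK p n x l) * p l k := by
          rw [iterK_succ, ← tsum_mul_left]
          exact tsum_congr fun l => by ring
      _ ≤ ∑' l, iterK p (m + n) j l * p l k := key
      _ = iterK p (m + n + 1) j k := (iterK_succ p (m+n) j k).symm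

include hnn hrow htrans in
lemma green_ratio_bound (m : ℕ) (x k : ℕ × ℕ) :
    iterK p m (0,0) x * GreenG p x k ≤ GreenG p (0,0) k := by
  have hp := subK_of_stochastic hnn hrow
  calc iterK p m (0,0) x * GreenG p x k = ∑' n, iterK p m (0,0) x * iterK p n x k := by
        rw [GreenG, ← tsum_mul_left]
    _ ≤ ∑' n : ℕ, iterK p (m + n) (0,0) k := by
        refine Summable.tsum_le_tsum (fun n => iterK_add_ge hnn hrow m x n (0,0) k)
          (((htrans x k)).mul_left _) ?_
        exact (htrans (0,0) k).comp_injective (add_right_injective m)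
    _ ≤ GreenG p (0,0) k := by
        refine Summable.tsum_le_tsum_of_inj (fun n => m + n) (add_right_injective m)
          (fun c _ => iterK_nonneg hp c (0,0) k) (fun n => le_rfl) ?_ (htrans (0,0) k)
        exact (htrans (0,0) k).comp_injective (add_right_injective m)

noncomputable def fhit (p : ℕ × ℕ → ℕ × ℕ → ℝ) (n : ℕ) (j : ℕ × ℕ) : ℝ :=
  ∑' l, iterK (killK p) n j l * p l (0,0)

lemma hitProb_eq : hitProb p j = ∑' n, fhit p n j := rfl

include hnn hrow in
lemma fhit_nonneg (n : ℕ) (j : ℕ × ℕ) : 0 ≤ fhit p n j := by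
  have hp := subK_of_stochastic hnn hrow
  exact tsum_nonneg fun l => mul_nonneg (iterK_nonneg (subK_kill hp) n j l) (hnn l _)

include hnn hrow in
lemma fhit_le (n : ℕ) (j : ℕ × ℕ) : fhit p n j ≤ iterK p (n+1) j (0,0) := by
  have hp := subK_of_stochastic hnn hrow
  rw [iterK_succ]
  refine Summable.tsum_le_tsum (fun l => mul_le_mul_of_nonneg_right
    (iterK_mono (subK_kill hp) hp (killK_le hp) n j l) (hnn l _)) ?_ ?_
  · exact summable_row_mul hp (iterK_row (subK_kill hp) n j).1
      (iterK_nonneg (subK_kill hp) n j) _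
  · exact summable_row_mul hp (iterK_row hp n j).1 (iterK_nonneg hp n j) _

include hnn hrow htrans in
lemma summable_fhit (j : ℕ × ℕ) : Summable fun n => fhit p n j := by
  refine Summable.of_nonneg_of_le (fun n => fhit_nonneg hnn hrow n j)
    (fun n => fhit_le hnn hrow n j) ?_
  exact (htrans j (0,0)).comp_injective (add_left_injective 1)

include hnn hrow in
lemma identB (n : ℕ) (j : ℕ × ℕ) : ∀ k,
    iterK p n j k = iterK (killK p) n j k
      + ∑ i ∈ Finset.range n, fhit p i j * iterK p (n - 1 - i) (0,0) k := by
  have hp := subK_of_stochastic hnn hrow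
  have hpk := subK_kill hp
  induction n with
  | zero => intro k; simp [iterK_zero, killK]
  | succ n ih =>
    intro k
    have hsA : Summable fun l => iterK (killK p) n j l * p l k :=
      summable_row_mul hp (iterK_row hpk n j).1 (iterK_nonneg hpk n j) k
    have hsB : ∀ i : ℕ, Summable fun l =>
        fhit p i j * (iterK p (n - 1 - i) (0,0) l * p l k) := fun i =>
      (summable_row_mul hp (iterK_row hp (n-1-i) (0,0)).1
        (iterK_nonneg hp (n-1-i) (0,0)) k).mul_left _
    have key0 : (∑' l, iterK (killK p) n j l * p l k)
        = iterK (killK p) (n+1) j k + (if k = (0,0) then fhit p n j else 0) := by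
      by_cases hk : k = (0,0)
      · subst hk
        rw [if_pos rfl, iterK_succ]
        have : (∑' l, iterK (killK p) n j l * killK p l (0,0)) = 0 := by
          simp [killK]
        rw [this, zero_add, fhit]
      · rw [if_neg hk, add_zero, iterK_succ]
        exact tsum_congr fun l => by rw [killK, if_neg hk]
    have harith : ∀ i ∈ Finset.range n, n - 1 - i + 1 = n - i := by
      intro i hi; rw [Finset.mem_range] at hi; omega
    calc iterK p (n+1) j k = ∑' l, iterK p n j l * p l k := iterK_succ p n j k
      _ = ∑' l, (iterK (killK p) n j l * p l k
            + ∑ i ∈ Finset.range n, fhit p i j * (iterK p (n - 1 - i) (0,0) l * p l k)) := by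
          refine tsum_congr fun l => ?_
          rw [ih l, add_mul, Finset.sum_mul]
          congr 1
          exact Finset.sum_congr rfl fun i _ => by ring
      _ = (∑' l, iterK (killK p) n j l * p l k)
            + ∑ i ∈ Finset.range n, fhit p i j * (∑' l, iterK p (n - 1 - i) (0,0) l * p l k) := by
          rw [Summable.tsum_add hsA (summable_sum fun i _ => hsB i), Summable.tsum_finsetSum fun i _ => hsB i]
          congr 1
          exact Finset.sum_congr rfl fun i _ => tsum_mul_left
      _ = iterK (killK p) (n+1) j k + (if k = (0,0) then fhit p n j else 0)
            + ∑ i ∈ Finset.range n, fhit p i j * iterK p (n - i) (0,0) k := by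
          rw [key0]
          congr 1
          refine Finset.sum_congr rfl fun i hi => ?_
          rw [← iterK_succ, harith i hi]
      _ = iterK (killK p) (n+1) j k
            + ∑ i ∈ Finset.range (n+1), fhit p i j * iterK p (n + 1 - 1 - i) (0,0) k := by
          rw [Finset.sum_range_succ]
          have h0 : iterK p (n + 1 - 1 - n) (0,0) k = if (0,0) = k then 1 else 0 := by
            have : n + 1 - 1 - n = 0 := by omega
            rw [this, iterK_zero]
          have : ∀ i ∈ Finset.range n, n + 1 - 1 - i = n - i := fun i _ => by omega
          rw [Finset.sum_congr rfl fun i hi =>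
            congrArg (fhit p i j * iterK p · (0,0) k) (this i hi)]
          rw [h0]
          by_cases hk : k = (0,0)
          · subst hk; simp; ring
          · rw [if_neg (fun h : (0,0) = k => hk h.symm)]
            simp
            exact fun h => (hk (by simpa using h)).elim

include hnn hrow htrans in
lemma star (j k : ℕ × ℕ) :
    GreenG p j k = Greeng p j k + hitProb p j * GreenG p (0,0) k := by
  have hsg := summable_gkill hnn hrow htrans j k
  have hcs : Summable fun n => ∑ i ∈ Finset.range n, fhit p i j * iterK p (n-1-i) (0,0) k := by
    refine ((htrans j k).sub hsg).congr fun n => ?_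
    have := identB hnn hrow n j k; linarith
  have h1 : GreenG p j k = Greeng p j k
      + ∑' n, ∑ i ∈ Finset.range n, fhit p i j * iterK p (n-1-i) (0,0) k := by
    rw [GreenG, Greeng, ← Summable.tsum_add hsg hcs]
    exact tsum_congr fun n => identB hnn hrow n j k
  rw [h1]
  congr 1
  have hshift : (∑' n, ∑ i ∈ Finset.range n, fhit p i j * iterK p (n-1-i) (0,0) k)
      = ∑' n, ∑ i ∈ Finset.range (n+1), fhit p i j * iterK p (n-i) (0,0) k := by
    rw [Summable.tsum_eq_zero_add hcs]
    simp only [Finset.range_zero, Finset.sum_empty, zero_add]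
    refine tsum_congr fun n => Finset.sum_congr rfl fun i hi => ?_
    rw [Finset.mem_range] at hi
    have harith : n + 1 - 1 - i = n - i := by omega
    rw [harith]
  rw [hshift]
  have habs1 : Summable fun n => ‖fhit p n j‖ := by
    rw [summable_norm_iff]; exact summable_fhit hnn hrow htrans j
  have habs2 : Summable fun n => ‖iterK p n (0,0) k‖ := by
    rw [summable_norm_iff]; exact htrans (0,0) k
  rw [← tsum_mul_tsum_eq_tsum_sum_range_of_summable_norm habs1 habs2]
  rfl

include hnn hrow htrans in
lemma g00_eq_one : Greeng p (0,0) (0,0) = 1 := by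
  have : ∀ n, iterK (killK p) n (0,0) (0,0) = if n = 0 then 1 else 0 := by
    intro n
    cases n with
    | zero => simp [iterK_zero]
    | succ n => rw [if_neg (Nat.succ_ne_zero n), iterK_succ]; simp [killK]
  rw [Greeng, tsum_congr this, tsum_eq_sum (s := {0}) (by intro n h; simp at h; simp [h])]
  simp

include hnn hrow htrans in
lemma hit0_lt_one : hitProb p (0,0) < 1 := by
  have hstar := star hnn hrow htrans (0,0) (0,0)
  rw [g00_eq_one hnn hrow htrans] at hstar
  have h1 : 1 ≤ GreenG p (0,0) (0,0) := GreenG_one_le hnn hrow htrans (0,0)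
  nlinarith [hstar, h1]

include hnn hrow htrans in
lemma g0k_eq (k : ℕ × ℕ) :
    Greeng p (0,0) k = (1 - hitProb p (0,0)) * GreenG p (0,0) k := by
  have hstar := star hnn hrow htrans (0,0) k
  linarith [hstar, (by ring : (1 - hitProb p (0,0)) * GreenG p (0,0) k
    = GreenG p (0,0) k - hitProb p (0,0) * GreenG p (0,0) k)]

include hnn hrow htrans in
lemma ratio_ident (hirr : ∀ j k, ∃ n, 0 < iterK p n j k) (j k : ℕ × ℕ) :
    GreenG p j k / GreenG p (0,0) k
      = (1 - hitProb p (0,0)) * (Greeng p j k / Greeng p (0,0) k) + hitProb p j := by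
  have hG0 : 0 < GreenG p (0,0) k := GreenG_pos hnn hrow htrans hirr (0,0) k
  have hq0 : 0 < 1 - hitProb p (0,0) := by linarith [hit0_lt_one hnn hrow htrans]
  have e2 : (1 - hitProb p (0,0)) * (Greeng p j k / Greeng p (0,0) k)
      = Greeng p j k / GreenG p (0,0) k := by
    rw [g0k_eq hnn hrow htrans k, ← div_div]
    field_simp
  rw [star hnn hrow htrans j k, add_div, mul_div_assoc, div_self (ne_of_gt hG0), mul_one, e2]

/-- kernel killed on a finite set `E`. -/
noncomputable def eK (p : ℕ × ℕ → ℕ × ℕ → ℝ) (E : Finset (ℕ × ℕ)) :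
    ℕ × ℕ → ℕ × ℕ → ℝ := fun j k => if k ∈ E then 0 else p j k

/-- probability of avoiding `E` during the first `n` steps. -/
noncomputable def sE (p : ℕ × ℕ → ℕ × ℕ → ℝ) (E : Finset (ℕ × ℕ)) (n : ℕ) (x : ℕ × ℕ) : ℝ :=
  ∑' z, iterK (eK p E) n x z

/-- probability of never returning to `E`. -/
noncomputable def qE (p : ℕ × ℕ → ℕ × ℕ → ℝ) (E : Finset (ℕ × ℕ)) (x : ℕ × ℕ) : ℝ :=
  ⨅ n, sE p E n x

variable {E : Finset (ℕ × ℕ)}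

lemma eK_le (hp : SubK p) (E : Finset (ℕ × ℕ)) (j k : ℕ × ℕ) : eK p E j k ≤ p j k := by
  unfold eK; split
  · exact hp.nn j k
  · exact le_rfl

lemma eK_nn (hp : SubK p) (E : Finset (ℕ × ℕ)) (j k : ℕ × ℕ) : 0 ≤ eK p E j k := by
  unfold eK; split
  · exact le_rfl
  · exact hp.nn j k

lemma subK_eK (hp : SubK p) (E : Finset (ℕ × ℕ)) : SubK (eK p E) := by
  refine ⟨eK_nn hp E, fun j => ?_, fun j => ?_⟩
  · exact Summable.of_nonneg_of_le (eK_nn hp E j) (eK_le hp E j) (hp.summ j)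
  · refine le_trans (Summable.tsum_le_tsum (eK_le hp E j) ?_ (hp.summ j)) (hp.le_one j)
    exact Summable.of_nonneg_of_le (eK_nn hp E j) (eK_le hp E j) (hp.summ j)

lemma sE_nonneg (hp : SubK p) (n : ℕ) (x : ℕ × ℕ) : 0 ≤ sE p E n x :=
  tsum_nonneg fun z => iterK_nonneg (subK_eK hp E) n x z

lemma sE_le_one (hp : SubK p) (n : ℕ) (x : ℕ × ℕ) : sE p E n x ≤ 1 :=
  (iterK_row (subK_eK hp E) n x).2

lemma sE_zero (hp : SubK p) (x : ℕ × ℕ) : sE p E 0 x = 1 := by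
  unfold sE
  simp only [iterK_zero]
  exact (hasSum_ite_eq' x (1:ℝ)).tsum_eq

lemma sE_succ_left (hp : SubK p) (n : ℕ) (x : ℕ × ℕ) :
    sE p E (n+1) x = ∑' l, eK p E x l * sE p E n l := by
  have hq := subK_eK hp E
  have hnn : ∀ l k, 0 ≤ eK p E x l * iterK (eK p E) n l k :=
    fun l k => mul_nonneg (eK_nn hp E x l) (iterK_nonneg hq n l k)
  have hrowS : ∀ l, Summable fun k => eK p E x l * iterK (eK p E) n l k :=
    fun l => ((iterK_row hq n l).1).mul_left _
  have hmarg : Summable fun l => ∑' k, eK p E x l * iterK (eK p E) n l k := by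
    refine Summable.of_nonneg_of_le (fun l => tsum_nonneg (hnn l)) (fun l => ?_) (hq.summ x)
    rw [tsum_mul_left]
    calc eK p E x l * ∑' k, iterK (eK p E) n l k ≤ eK p E x l * 1 :=
          mul_le_mul_of_nonneg_left (iterK_row hq n l).2 (eK_nn hp E x l)
      _ = eK p E x l := mul_one _
  obtain ⟨-, -, hswap⟩ := swap_tsum hnn hrowS hmarg
  calc sE p E (n+1) x = ∑' k, ∑' l, eK p E x l * iterK (eK p E) n l k :=
        tsum_congr fun k => iterK_succ_left hq n x k
    _ = ∑' l, ∑' k, eK p E x l * iterK (eK p E) n l k := hswap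
    _ = ∑' l, eK p E x l * sE p E n l := tsum_congr fun l => tsum_mul_left

lemma sE_antitone (hp : SubK p) (x : ℕ × ℕ) : Antitone fun n => sE p E n x := by
  have key : ∀ n, ∀ x, sE p E (n+1) x ≤ sE p E n x := by
    intro n
    induction n with
    | zero =>
      intro x
      rw [sE_succ_left hp, sE_zero hp]
      calc (∑' l, eK p E x l * sE p E 0 l) = ∑' l, eK p E x l := by
            refine tsum_congr fun l => ?_; rw [sE_zero hp, mul_one]
        _ ≤ 1 := (subK_eK hp E).le_one x
    | succ n ih =>
      intro x
      rw [sE_succ_left hp, sE_succ_left hp]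
      refine Summable.tsum_le_tsum (fun l => mul_le_mul_of_nonneg_left (ih l) (eK_nn hp E x l)) ?_ ?_
      all_goals
        refine Summable.of_nonneg_of_le
          (fun l => mul_nonneg (eK_nn hp E x l) (sE_nonneg hp _ l)) (fun l => ?_)
          ((subK_eK hp E).summ x)
        calc eK p E x l * sE p E _ l ≤ eK p E x l * 1 :=
              mul_le_mul_of_nonneg_left (sE_le_one hp _ l) (eK_nn hp E x l)
          _ = eK p E x l := mul_one _
  exact antitone_nat_of_succ_le fun n => key n x

lemma qE_nonneg (hp : SubK p) (x : ℕ × ℕ) : 0 ≤ qE p E x :=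
  Real.iInf_nonneg fun n => sE_nonneg hp n x

lemma qE_le_sE (hp : SubK p) (n : ℕ) (x : ℕ × ℕ) : qE p E x ≤ sE p E n x :=
  ciInf_le ⟨0, fun y hy => by obtain ⟨m, rfl⟩ := hy; exact sE_nonneg hp m x⟩ n

lemma tendsto_sE (hp : SubK p) (x : ℕ × ℕ) :
    Filter.Tendsto (fun n => sE p E n x) atTop (nhds (qE p E x)) :=
  tendsto_atTop_ciInf (sE_antitone hp x)
    ⟨0, fun y hy => by obtain ⟨m, rfl⟩ := hy; exact sE_nonneg hp m x⟩

lemma iterK_one {S : Type*} [DecidableEq S] {q : S → S → ℝ} (hq : SubK q) (x k : S) :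
    iterK q 1 x k = q x k := by
  rw [iterK_succ]
  have he : ∀ l, iterK q 0 x l * q l k = (if x = l then q x k else 0) := by
    intro l; by_cases h : x = l <;> simp [iterK_zero, h]
  rw [tsum_congr he, (hasSum_ite_eq' x (q x k)).tsum_eq]

lemma qE_le_one_sub (hp : SubK p) (hrow : ∀ j, ∑' k, p j k = 1) (x : ℕ × ℕ) :
    qE p E x ≤ 1 - ∑ l ∈ E, p x l := by
  refine le_trans (qE_le_sE hp 1 x) ?_
  have h1 : sE p E 1 x = ∑' k, eK p E x k := by
    unfold sE
    exact tsum_congr fun k => iterK_one (subK_eK hp E) x k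
  have hsum_ite : Summable fun k => if k ∈ E then p x k else 0 := by
    refine Summable.of_nonneg_of_le (fun k => ?_) (fun k => ?_) (hp.summ x)
    · split <;> simp [hp.nn x _]
    · split <;> simp [hp.nn x _, le_refl]
  have h2 : (∑' k, eK p E x k) = (∑' k, p x k) - ∑' k, if k ∈ E then p x k else 0 := by
    rw [← Summable.tsum_sub (hp.summ x) hsum_ite]
    refine tsum_congr fun k => ?_
    unfold eK
    by_cases h : k ∈ E <;> simp [h]
  have h3 : (∑' k, if k ∈ E then p x k else 0) = ∑ l ∈ E, p x l := by
    rw [tsum_eq_sum (s := E) (fun b hb => if_neg hb)]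
    exact Finset.sum_congr rfl fun l hl => if_pos hl
  rw [h1, h2, h3, hrow x]

include hnn hrow in
lemma dagE (E : Finset (ℕ × ℕ)) : ∀ (n : ℕ) (x : ℕ × ℕ),
    (if x ∈ E then 0 else sE p E n x)
      + ∑ m ∈ Finset.range (n+1), ∑ y ∈ E, iterK p m x y * sE p E (n - m) y = 1 := by
  have hp := subK_of_stochastic hnn hrow
  intro n
  induction n with
  | zero =>
    intro x
    simp only [zero_add, Finset.range_one, Finset.sum_singleton, Nat.sub_zero]
    have h1 : ∑ y ∈ E, iterK p 0 x y * sE p E 0 y = if x ∈ E then 1 else 0 := by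
      have : ∀ y ∈ E, iterK p 0 x y * sE p E 0 y = if x = y then 1 else 0 := by
        intro y _
        rw [sE_zero hp, mul_one, iterK_zero]
      rw [Finset.sum_congr rfl this, Finset.sum_ite_eq E x (fun _ => (1:ℝ))]
    rw [h1, sE_zero hp]
    by_cases h : x ∈ E <;> simp [h]
  | succ n ih =>
    intro x
    have hinner0 : ∑ y ∈ E, iterK p 0 x y * sE p E (n + 1 - 0) y
        = if x ∈ E then sE p E (n+1) x else 0 := by
      simp only [Nat.sub_zero]
      have : ∀ y ∈ E, iterK p 0 x y * sE p E (n+1) y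
          = if x = y then sE p E (n+1) y else 0 := by
        intro y _
        rw [iterK_zero]
        by_cases h : x = y <;> simp [h]
      rw [Finset.sum_congr rfl this, Finset.sum_ite_eq E x]
    -- the terms m+1
    have hmid : ∀ m, m ≤ n → (∑ y ∈ E, iterK p (m+1) x y * sE p E (n + 1 - (m+1)) y)
        = ∑' l, p x l * (∑ y ∈ E, iterK p m l y * sE p E (n - m) y) := by
      intro m hm
      have hsummand : ∀ y ∈ E, Summable fun l => p x l * (iterK p m l y * sE p E (n - m) y) := by
        intro y _
        refine Summable.of_nonneg_of_le (fun l => mul_nonneg (hnn x l)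
          (mul_nonneg (iterK_nonneg hp m l y) (sE_nonneg hp _ y))) (fun l => ?_) (hp.summ x)
        calc p x l * (iterK p m l y * sE p E (n - m) y) ≤ p x l * (1 * 1) := by
              refine mul_le_mul_of_nonneg_left ?_ (hnn x l)
              exact mul_le_mul (iterK_entry_le_one hp m l y) (sE_le_one hp _ y)
                (sE_nonneg hp _ y) zero_le_one
          _ = p x l := by ring
      have key : ∀ y ∈ E, iterK p (m+1) x y * sE p E (n - m) y
          = ∑' l, p x l * (iterK p m l y * sE p E (n - m) y) := by
        intro y hy
        rw [iterK_succ_left hp, ← tsum_mul_right]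
        exact tsum_congr fun l => by ring
      have harith : n + 1 - (m + 1) = n - m := by omega
      rw [harith, Finset.sum_congr rfl key, ← Summable.tsum_finsetSum hsummand]
      exact tsum_congr fun l => (Finset.mul_sum _ _ _).symm
    have hsum_c : ∀ m : ℕ, Summable fun l =>
        p x l * (∑ y ∈ E, iterK p m l y * sE p E (n - m) y) := by
      intro m
      refine Summable.of_nonneg_of_le (fun l => mul_nonneg (hnn x l) (Finset.sum_nonneg
        fun y _ => mul_nonneg (iterK_nonneg hp m l y) (sE_nonneg hp _ y))) (fun l => ?_)
        ((hp.summ x).mul_right (E.card : ℝ))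
      refine mul_le_mul_of_nonneg_left ?_ (hnn x l)
      calc (∑ y ∈ E, iterK p m l y * sE p E (n - m) y) ≤ ∑ y ∈ E, 1 := by
            refine Finset.sum_le_sum fun y _ => ?_
            calc iterK p m l y * sE p E (n - m) y ≤ 1 * 1 :=
                  mul_le_mul (iterK_entry_le_one hp m l y) (sE_le_one hp _ y)
                    (sE_nonneg hp _ y) zero_le_one
              _ = 1 := mul_one 1
        _ = (E.card : ℝ) := by simp
    have hmid2 : (∑ m ∈ Finset.range (n+1),
          ∑ y ∈ E, iterK p (m+1) x y * sE p E (n + 1 - (m+1)) y)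
        = ∑' l, p x l * ∑ m ∈ Finset.range (n+1),
            (∑ y ∈ E, iterK p m l y * sE p E (n - m) y) := by
      have : ∀ m ∈ Finset.range (n+1), (∑ y ∈ E, iterK p (m+1) x y * sE p E (n + 1 - (m+1)) y)
          = ∑' l, p x l * (∑ y ∈ E, iterK p m l y * sE p E (n - m) y) := by
        intro m hm
        exact hmid m (by have := Finset.mem_range.1 hm; omega)
      rw [Finset.sum_congr rfl this, ← Summable.tsum_finsetSum (fun m _ => hsum_c m)]
      exact tsum_congr fun l => (Finset.mul_sum _ _ _).symm
    have hIH : ∀ l, (∑ m ∈ Finset.range (n+1), ∑ y ∈ E, iterK p m l y * sE p E (n - m) y)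
        = 1 - (if l ∈ E then 0 else sE p E n l) := by
      intro l
      have := ih l
      linarith
    have hsplit : (∑' l, p x l * ∑ m ∈ Finset.range (n+1),
          (∑ y ∈ E, iterK p m l y * sE p E (n - m) y))
        = 1 - sE p E (n+1) x := by
      have he : ∀ l, p x l * (∑ m ∈ Finset.range (n+1),
            ∑ y ∈ E, iterK p m l y * sE p E (n - m) y)
          = p x l - eK p E x l * sE p E n l := by
        intro l
        rw [hIH l]
        unfold eK
        by_cases h : l ∈ E <;> simp [h] <;> ring
      have hseK : Summable fun l => eK p E x l * sE p E n l := by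
        refine Summable.of_nonneg_of_le (fun l => mul_nonneg (eK_nn hp E x l)
          (sE_nonneg hp _ l)) (fun l => ?_) ((subK_eK hp E).summ x)
        calc eK p E x l * sE p E n l ≤ eK p E x l * 1 :=
              mul_le_mul_of_nonneg_left (sE_le_one hp _ l) (eK_nn hp E x l)
          _ = eK p E x l := mul_one _
      rw [tsum_congr he, Summable.tsum_sub (hp.summ x) hseK, hrow x, sE_succ_left hp]
    rw [Finset.sum_range_succ' _ (n+1), hinner0, hmid2, hsplit]
    by_cases h : x ∈ E <;> simp [h] <;> ring

include hnn hrow htrans in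
lemma dagLim (E : Finset (ℕ × ℕ)) (x : ℕ × ℕ) :
    (if x ∈ E then 0 else qE p E x) + ∑' m : ℕ, ∑ y ∈ E, iterK p m x y * qE p E y = 1 := by
  have hp := subK_of_stochastic hnn hrow
  set f : ℕ → ℕ → ℝ := fun n m =>
    if m ≤ n then ∑ y ∈ E, iterK p m x y * sE p E (n - m) y else 0 with hf
  have hbound_sum : Summable fun m => ∑ y ∈ E, iterK p m x y :=
    summable_sum fun y _ => htrans x y
  have hab : ∀ m : ℕ, Tendsto (fun n => f n m) atTop
      (nhds (∑ y ∈ E, iterK p m x y * qE p E y)) := by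
    intro m
    have h1 : Tendsto (fun n => ∑ y ∈ E, iterK p m x y * sE p E (n - m) y) atTop
        (nhds (∑ y ∈ E, iterK p m x y * qE p E y)) := by
      refine tendsto_finset_sum E fun y _ => Tendsto.const_mul _ ?_
      exact (tendsto_sE hp y).comp (tendsto_sub_atTop_nat m)
    refine h1.congr' ?_
    filter_upwards [eventually_ge_atTop m] with n hn
    rw [hf]; simp only [if_pos hn]
  have h_bound : ∀ᶠ n in atTop, ∀ m, ‖f n m‖ ≤ ∑ y ∈ E, iterK p m x y := by
    refine Eventually.of_forall fun n m => ?_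
    show ‖if m ≤ n then ∑ y ∈ E, iterK p m x y * sE p E (n - m) y else 0‖
      ≤ ∑ y ∈ E, iterK p m x y
    split
    · rw [Real.norm_eq_abs, abs_of_nonneg (Finset.sum_nonneg fun y _ =>
        mul_nonneg (iterK_nonneg hp m x y) (sE_nonneg hp _ y))]
      refine Finset.sum_le_sum fun y _ => ?_
      calc iterK p m x y * sE p E (n - m) y ≤ iterK p m x y * 1 :=
            mul_le_mul_of_nonneg_left (sE_le_one hp _ y) (iterK_nonneg hp m x y)
        _ = iterK p m x y := mul_one _
    · simp only [norm_zero]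
      exact Finset.sum_nonneg fun y _ => iterK_nonneg hp m x y
  have htan := tendsto_tsum_of_dominated_convergence hbound_sum hab h_bound
  have heval : ∀ n : ℕ, (∑' m, f n m) = 1 - (if x ∈ E then 0 else sE p E n x) := by
    intro n
    have h1 : (∑' m, f n m) = ∑ m ∈ Finset.range (n+1), f n m := by
      refine tsum_eq_sum fun m hm => ?_
      rw [Finset.mem_range, not_lt] at hm
      rw [hf]; exact if_neg (by omega)
    have h2 : ∑ m ∈ Finset.range (n+1), f n m
        = ∑ m ∈ Finset.range (n+1), ∑ y ∈ E, iterK p m x y * sE p E (n - m) y := by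
      refine Finset.sum_congr rfl fun m hm => ?_
      rw [Finset.mem_range] at hm
      rw [hf]; exact if_pos (by omega)
    have := dagE hnn hrow E n x
    rw [h1, h2]
    linarith
  have hlhs : Tendsto (fun n => ∑' m, f n m) atTop
      (nhds (1 - (if x ∈ E then 0 else qE p E x))) := by
    have h2 : Tendsto (fun n => 1 - (if x ∈ E then 0 else sE p E n x)) atTop
        (nhds (1 - (if x ∈ E then 0 else qE p E x))) := by
      by_cases h : x ∈ E
      · simp only [if_pos h]; exact tendsto_const_nhds
      · simp only [if_neg h]
        exact tendsto_const_nhds.sub (tendsto_sE hp x)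
    exact h2.congr fun n => (heval n).symm
  have := tendsto_nhds_unique htan hlhs
  linarith [this]

include hnn hrow htrans in
lemma ddag (E : Finset (ℕ × ℕ)) (x : ℕ × ℕ) :
    (if x ∈ E then 0 else qE p E x) + ∑ y ∈ E, GreenG p x y * qE p E y = 1 := by
  have h := dagLim hnn hrow htrans E x
  have hswap : (∑' m : ℕ, ∑ y ∈ E, iterK p m x y * qE p E y)
      = ∑ y ∈ E, GreenG p x y * qE p E y := by
    rw [Summable.tsum_finsetSum (fun y _ => (htrans x y).mul_right _)]
    refine Finset.sum_congr rfl fun y _ => ?_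
    rw [GreenG, ← tsum_mul_right]
  rw [hswap] at h
  exact h

include hnn hrow htrans in
lemma main_limit (hirr : ∀ j k, ∃ n, 0 < iterK p n j k) (x : ℕ × ℕ) {L : ℝ}
    (hL : Tendsto (fun k : ℕ × ℕ => GreenG p x k / GreenG p (0,0) k) cofinite (nhds L)) :
    L = 1 := by
  have hp := subK_of_stochastic hnn hrow
  have hG0 : ∀ k, 0 < GreenG p (0,0) k := GreenG_pos hnn hrow htrans hirr (0,0)
  obtain ⟨mx, hmx⟩ := hirr (0,0) x
  set Cx : ℝ := (iterK p mx (0,0) x)⁻¹ with hCx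
  have hKb : ∀ k, GreenG p x k / GreenG p (0,0) k ≤ Cx := by
    intro k
    rw [div_le_iff₀ (hG0 k)]
    have h := green_ratio_bound hnn hrow htrans mx x k
    calc GreenG p x k = Cx * (iterK p mx (0,0) x * GreenG p x k) := by
          rw [hCx, ← mul_assoc, inv_mul_cancel₀ (ne_of_gt hmx), one_mul]
      _ ≤ Cx * GreenG p (0,0) k :=
          mul_le_mul_of_nonneg_left h (inv_nonneg.2 (le_of_lt hmx))
  have hKnn : ∀ k, 0 ≤ GreenG p x k / GreenG p (0,0) k := fun k =>
    div_nonneg (GreenG_nonneg hnn hrow x k) (le_of_lt (hG0 k))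
  set En : ℕ → Finset (ℕ × ℕ) := fun n => Finset.range n ×ˢ Finset.range n with hEn
  have hmemEn : ∀ y : ℕ × ℕ, ∀ n : ℕ, y ∈ En n ↔ y.1 < n ∧ y.2 < n := by
    intro y n
    simp [hEn, Finset.mem_product]
  have hEn_ev : ∀ y : ℕ × ℕ, ∀ᶠ n in atTop, y ∈ En n := by
    intro y
    filter_upwards [eventually_ge_atTop (max y.1 y.2 + 1)] with n hn
    rw [hmemEn]
    omega
  have hto1 : ∀ y, Tendsto (fun n => ∑ l ∈ En n, p y l) atTop (nhds 1) := by
    intro y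
    have hs : HasSum (p y) 1 := hrow y ▸ (hp.summ y).hasSum
    have hmono : Monotone En := by
      intro a b hab
      refine Finset.product_subset_product ?_ ?_ <;>
        exact Finset.range_subset_range.2 hab
    have hEnTop : Tendsto En atTop atTop := by
      refine tendsto_atTop_finset_of_monotone hmono fun l => ?_
      exact ⟨max l.1 l.2 + 1, (hmemEn l _).2 (by omega)⟩
    exact hs.comp hEnTop
  have hq0' : ∀ y n, 0 ≤ qE p (En n) y := fun y n => qE_nonneg hp y
  have hqto0 : ∀ y, Tendsto (fun n => qE p (En n) y) atTop (nhds 0) := by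
    intro y
    have hub : Tendsto (fun n => 1 - ∑ l ∈ En n, p y l) atTop (nhds 0) := by
      have := tendsto_const_nhds (x := (1:ℝ)) (f := atTop (α := ℕ)) |>.sub (hto1 y)
      simpa using this
    refine squeeze_zero (fun n => hq0' y n) (fun n => ?_) hub
    exact qE_le_one_sub hp hrow y
  have key : ∀ ε : ℝ, 0 < ε → |L - 1| ≤ ε := by
    intro ε hε
    have hev : ∀ᶠ k in cofinite,
        dist (GreenG p x k / GreenG p (0,0) k) L < ε := Metric.tendsto_nhds.1 hL ε hε
    have hfin : {k : ℕ × ℕ | ¬ dist (GreenG p x k / GreenG p (0,0) k) L < ε}.Finite :=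
      eventually_cofinite.1 hev
    set F : Finset (ℕ × ℕ) := hfin.toFinset with hF
    set R : ℕ → ℝ := fun n => ∑ y ∈ F, GreenG p (0,0) y * qE p (En n) y with hR
    have hR0 : Tendsto R atTop (nhds 0) := by
      rw [hR]
      have : Tendsto (fun n => ∑ y ∈ F, GreenG p (0,0) y * qE p (En n) y) atTop
          (nhds (∑ y ∈ F, GreenG p (0,0) y * 0)) :=
        tendsto_finset_sum F fun y _ => (hqto0 y).const_mul _
      simpa using this
    have hbnd : ∀ᶠ n in atTop, |L - 1| ≤ ε + (|L| + Cx) * R n := by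
      filter_upwards [hEn_ev (0,0), hEn_ev x] with n h0m hxm
      set E := En n with hE
      set c : ℕ × ℕ → ℝ := fun y => GreenG p (0,0) y * qE p E y with hc
      have hcnn : ∀ y, 0 ≤ c y := fun y =>
        mul_nonneg (GreenG_nonneg hnn hrow _ y) (qE_nonneg hp y)
      have h01 : ∑ y ∈ E, c y = 1 := by
        have := ddag hnn hrow htrans E (0,0)
        rw [if_pos h0m, zero_add] at this
        exact this
      have hx1 : ∑ y ∈ E, GreenG p x y * qE p E y = 1 := by
        have := ddag hnn hrow htrans E x
        rw [if_pos hxm, zero_add] at this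
        exact this
      set K : ℕ × ℕ → ℝ := fun y => GreenG p x y / GreenG p (0,0) y with hK
      have hterm : ∀ y ∈ E, c y * (L - K y) = L * c y - GreenG p x y * qE p E y := by
        intro y _
        have hKmul : K y * GreenG p (0,0) y = GreenG p x y :=
          div_mul_cancel₀ _ (ne_of_gt (hG0 y))
        calc c y * (L - K y) = L * c y - (K y * GreenG p (0,0) y) * qE p E y := by
              rw [hc]; ring
          _ = L * c y - GreenG p x y * qE p E y := by rw [hKmul]
      have hsum : ∑ y ∈ E, c y * (L - K y) = L - 1 := by
        rw [Finset.sum_congr rfl hterm, Finset.sum_sub_distrib, ← Finset.mul_sum, h01, hx1,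
          mul_one]
      have habs : |L - 1| ≤ ∑ y ∈ E, c y * |L - K y| := by
        rw [← hsum]
        refine le_trans (Finset.abs_sum_le_sum_abs _ _) ?_
        refine Finset.sum_le_sum fun y _ => ?_
        rw [abs_mul, abs_of_nonneg (hcnn y)]
      have hpoint : ∀ y ∈ E, c y * |L - K y|
          ≤ ε * c y + (|L| + Cx) * (if y ∈ F then c y else 0) := by
        intro y _
        by_cases hyF : y ∈ F
        · rw [if_pos hyF]
          have h1 : |L - K y| ≤ |L| + Cx := by
            refine le_trans (abs_sub _ _) ?_
            have : |K y| = K y := abs_of_nonneg (hKnn y)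
            rw [this]
            exact add_le_add le_rfl (hKb y)
          nlinarith [hcnn y, hε, mul_le_mul_of_nonneg_left h1 (hcnn y)]
        · rw [if_neg hyF]
          have hyd : dist (K y) L < ε := by
            by_contra hcon
            exact hyF (hfin.mem_toFinset.2 hcon)
          have h1 : |L - K y| ≤ ε := by
            rw [abs_sub_comm, ← Real.dist_eq]
            exact le_of_lt hyd
          rw [mul_zero, add_zero]
          calc c y * |L - K y| ≤ c y * ε := mul_le_mul_of_nonneg_left h1 (hcnn y)
            _ = ε * c y := mul_comm _ _
      have hfinal : (∑ y ∈ E, c y * |L - K y|) ≤ ε + (|L| + Cx) * R n := by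
        refine le_trans (Finset.sum_le_sum hpoint) ?_
        rw [Finset.sum_add_distrib, ← Finset.mul_sum, h01, mul_one, ← Finset.mul_sum]
        have hsub : (∑ y ∈ E, if y ∈ F then c y else 0) ≤ R n := by
          rw [Finset.sum_ite_mem]
          refine Finset.sum_le_sum_of_subset_of_nonneg (Finset.inter_subset_right) ?_
          intro y hy _
          exact hcnn y
        have hLC : 0 ≤ |L| + Cx := by
          have := le_trans (hKnn (0,0)) (hKb (0,0))
          positivity
        exact add_le_add le_rfl (mul_le_mul_of_nonneg_left hsub hLC)
      exact le_trans habs hfinal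
    have hlim2 : Tendsto (fun n => ε + (|L| + Cx) * R n) atTop (nhds ε) := by
      have : Tendsto (fun n => ε + (|L| + Cx) * R n) atTop (nhds (ε + (|L| + Cx) * 0)) :=
        tendsto_const_nhds.add (hR0.const_mul _)
      simpa using this
    exact ge_of_tendsto hlim2 hbnd
  by_contra hne
  have habs : 0 < |L - 1| := abs_pos.2 (sub_ne_zero.2 hne)
  have := key (|L - 1| / 2) (by linarith)
  linarith

include hnn hrow htrans in
theorem martin_final {κ : ℕ × ℕ → ℝ}
    (hirr : ∀ j k, ∃ n, 0 < iterK p n j k)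
    (hlim : ∀ j, Tendsto (fun k : ℕ × ℕ => Greeng p j k / Greeng p (0, 0) k)
      cofinite (nhds (κ j / κ (0, 0)))) :
    (∀ j, (1 - hitProb p (0, 0)) * (κ j / κ (0, 0)) + hitProb p j = 1) ∧
    (∀ j, Tendsto (fun k : ℕ × ℕ => GreenG p j k / GreenG p (0, 0) k)
      cofinite (nhds 1)) := by
  have hlimK : ∀ j, Tendsto (fun k : ℕ × ℕ => GreenG p j k / GreenG p (0,0) k) cofinite
      (nhds ((1 - hitProb p (0,0)) * (κ j / κ (0,0)) + hitProb p j)) := by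
    intro j
    have h1 : Tendsto (fun k : ℕ × ℕ =>
        (1 - hitProb p (0,0)) * (Greeng p j k / Greeng p (0,0) k) + hitProb p j) cofinite
        (nhds ((1 - hitProb p (0,0)) * (κ j / κ (0,0)) + hitProb p j)) :=
      ((hlim j).const_mul _).add_const _
    exact h1.congr fun k => (ratio_ident hnn hrow htrans hirr j k).symm
  have parta : ∀ j, (1 - hitProb p (0,0)) * (κ j / κ (0,0)) + hitProb p j = 1 :=
    fun j => main_limit hnn hrow htrans hirr j (hlimK j)
  exact ⟨parta, fun j => parta j ▸ hlimK j⟩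

/-- If the Martin kernel of the killed chain converges to `κ(j)/κ(0)` as `‖k‖ → ∞` and the
only nonnegative harmonic functions of the (transient, irreducible, stochastic) chain are
the constants, then `P₀(τ₀=∞)·κ(j)/κ(0) + P_j(τ₀<∞) = 1` and `G(j,k)/G(0,k) → 1`. -/
theorem martin_kernel_limit_is_one
    (p : ℕ × ℕ → ℕ × ℕ → ℝ) (κ : ℕ × ℕ → ℝ)
    (hnn : ∀ j k, 0 ≤ p j k) (hrow : ∀ j, ∑' k : ℕ × ℕ, p j k = 1)
    (hirr : ∀ j k, ∃ n, 0 < iterK p n j k)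
    (htrans : ∀ j k, Summable (fun n : ℕ => iterK p n j k))
    (hκ0 : 0 < κ (0, 0))
    (hlim : ∀ j, Tendsto (fun k : ℕ × ℕ => Greeng p j k / Greeng p (0, 0) k)
      cofinite (nhds (κ j / κ (0, 0))))
    (hLiouville : ∀ h : ℕ × ℕ → ℝ, (∀ j, 0 ≤ h j) →
      (∀ j, ∑' k : ℕ × ℕ, p j k * h k = h j) → ∃ cst : ℝ, ∀ j, h j = cst) :
    (∀ j, (1 - hitProb p (0, 0)) * (κ j / κ (0, 0)) + hitProb p j = 1) ∧
    (∀ j, Tendsto (fun k : ℕ × ℕ => GreenG p j k / GreenG p (0, 0) k)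
      cofinite (nhds 1)) := by
  exact martin_final hnn hrow htrans hirr hlim
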